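/- Let C be an [n,k]-linear code over F_q with k ≥ 2. Then d_p^{k-1}(C) = d_p^k(C) if and only if d_p^{k-1}(C) = d_p^k(C) = n. -/

import Mathlib

/-- The pair support of a subspace `D ≤ F^n` (indices mod `n`). -/
def pairSupport {F : Type*} [Field F] {n : ℕ} [NeZero n] (D : Submodule F (Fin n → F)) :
    Set (Fin n) :=
  {i | ∃ x ∈ D, x i ≠ 0 ∨ x (i + 1) ≠ 0}

/-- The `r`-minimal pair weight `d_p^r(C)` of a linear code `C ≤ F^n`. -/
noncomputable def dp {F : Type*} [Field F] {n : ℕ} [NeZero n]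
    (C : Submodule F (Fin n → F)) (r : ℕ) : ℕ :=
  sInf {m | ∃ D : Submodule F (Fin n → F), D ≤ C ∧ Module.finrank F D = r ∧
    (pairSupport D).ncard = m}

open Fin.NatCast in
lemma exists_succ_not_mem {n : ℕ} [NeZero n] {S : Set (Fin n)} (hne : S.Nonempty)
    (hproper : S ≠ Set.univ) : ∃ i ∈ S, i + 1 ∉ S := by
  by_contra hcon
  push_neg at hcon
  obtain ⟨i0, hi0⟩ := hne
  have key : ∀ m : ℕ, i0 + (m : Fin n) ∈ S := by
    intro m
    induction m with
    | zero => simpa using hi0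
    | succ m ih =>
      have h := hcon _ ih
      have : i0 + ((m + 1 : ℕ) : Fin n) = i0 + (m : Fin n) + 1 := by
        push_cast; exact (add_assoc _ _ _).symm
      rw [this]
      exact h
  apply hproper
  ext j
  simp only [Set.mem_univ, iff_true]
  have h := key (j - i0 : Fin n).val
  simpa [Fin.cast_val_eq_self] using h

theorem dp_pred_eq_dp_iff {F : Type*} [Field F] [Fintype F] {n k : ℕ} [NeZero n]
    (C : Submodule F (Fin n → F)) (hC : Module.finrank F C = k) (hk : 2 ≤ k) :
    dp C (k - 1) = dp C k ↔ (dp C (k - 1) = n ∧ dp C k = n) := by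
  set S := pairSupport C with hS
  have hSfin : S.Finite := Set.toFinite _
  have hdpk : dp C k = S.ncard := by
    have hset : {m | ∃ D : Submodule F (Fin n → F), D ≤ C ∧ Module.finrank F D = k ∧
        (pairSupport D).ncard = m} = {S.ncard} := by
      ext m
      simp only [Set.mem_setOf_eq, Set.mem_singleton_iff]
      constructor
      · rintro ⟨D, hDC, hDr, rfl⟩
        have hD : D = C := Submodule.eq_of_le_of_finrank_eq hDC (by rw [hDr, hC])
        rw [hD]
      · rintro rfl
        exact ⟨C, le_refl _, hC, rfl⟩
    rw [dp, hset, csInf_singleton]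
  constructor
  · intro h
    suffices hn : dp C k = n by exact ⟨h.trans hn, hn⟩
    by_contra hne
    have hle : S.ncard ≤ n := by
      have h2 := Set.ncard_le_ncard (Set.subset_univ S) Set.finite_univ
      simpa [Set.ncard_univ] using h2
    have hlt : S.ncard < n :=
      lt_of_le_of_ne hle (fun hh => hne (by rw [hdpk, hh]))
    have hCbot : C ≠ ⊥ := by
      intro hb
      rw [hb, finrank_bot] at hC
      omega
    have hSne : S.Nonempty := by
      obtain ⟨x, hxC, hxne⟩ := (Submodule.ne_bot_iff C).mp hCbot
      obtain ⟨j, hj⟩ := Function.ne_iff.mp hxne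
      exact ⟨j, x, hxC, Or.inl hj⟩
    have hproper : S ≠ Set.univ := by
      intro hu
      rw [hu, Set.ncard_univ] at hlt
      simp at hlt
    obtain ⟨i, hiS, hi1⟩ := exists_succ_not_mem hSne hproper
    obtain ⟨x0, hx0C, hx0⟩ := hiS
    have hx0i : x0 i ≠ 0 := by
      rcases hx0 with h' | h'
      · exact h'
      · exact absurd ⟨x0, hx0C, Or.inl h'⟩ hi1
    let φ : C →ₗ[F] F := (LinearMap.proj i).comp C.subtype
    have hφsurj : Function.Surjective φ := by
      intro c
      refine ⟨⟨(c * (x0 i)⁻¹) • x0, C.smul_mem _ hx0C⟩, ?_⟩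
      simp only [φ, LinearMap.comp_apply, Submodule.subtype_apply, LinearMap.proj_apply,
        Pi.smul_apply, smul_eq_mul]
      field_simp
    have hker : Module.finrank F (LinearMap.ker φ) = k - 1 := by
      have h1 := LinearMap.finrank_range_add_finrank_ker φ
      have h2 : Module.finrank F (LinearMap.range φ) = 1 := by
        rw [LinearMap.range_eq_top.mpr hφsurj, finrank_top, Module.finrank_self]
      rw [hC] at h1
      omega
    set D : Submodule F (Fin n → F) := (LinearMap.ker φ).map C.subtype with hD
    have hDC : D ≤ C := by
      rintro _ ⟨y, hy, rfl⟩
      exact y.2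
    have hDr : Module.finrank F D = k - 1 := by
      rw [hD, Submodule.finrank_map_subtype_eq]
      exact hker
    have hDzero : ∀ x ∈ D, x i = 0 ∧ x (i + 1) = 0 := by
      rintro _ ⟨y, hy, rfl⟩
      simp only [LinearMap.mem_ker, φ, LinearMap.comp_apply, Submodule.subtype_apply,
        LinearMap.proj_apply] at hy
      refine ⟨hy, ?_⟩
      by_contra hne'
      exact hi1 ⟨(y : Fin n → F), y.2, Or.inl hne'⟩
    have hsub : pairSupport D ⊆ S \ {i} := by
      rintro j ⟨x, hxD, hx⟩
      refine ⟨⟨x, hDC hxD, hx⟩, ?_⟩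
      intro hji
      rw [Set.mem_singleton_iff] at hji
      subst hji
      obtain ⟨h1, h2⟩ := hDzero x hxD
      rcases hx with h' | h'
      · exact h' h1
      · exact h' h2
    have hd1 : dp C (k - 1) ≤ (pairSupport D).ncard :=
      Nat.sInf_le ⟨D, hDC, hDr, rfl⟩
    have hd2 : (pairSupport D).ncard ≤ (S \ {i}).ncard :=
      Set.ncard_le_ncard hsub hSfin.diff
    have hd3 : (S \ {i}).ncard < S.ncard :=
      Set.ncard_diff_singleton_lt_of_mem ⟨x0, hx0C, hx0⟩ hSfin
    rw [hdpk] at h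
    omega
  · rintro ⟨h1, h2⟩
    rw [h1, h2]
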